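/- Let Γ be a finite group, P a finite Γ-poset and Q an induced Γ-subposet of P. If P strongly Γ-collapses to Q, then the order complex Δ(P) strongly Γ-collapses to Δ(Q). -/

import Mathlib

/-- A Γ-equivariant order-preserving self-map of the Γ-poset `P`, regarded as a map of the
induced subposet `A`, which fixes every point of `Q` (an element of `Def_Γ(A, Q)`). -/
def IsDefPosetMap (Γ : Type*) [Group Γ] {P : Type*} [PartialOrder P] [MulAction Γ P]
    (A Q : Set P) (f : P → P) : Prop :=
  Set.MapsTo f A A ∧ (∀ x ∈ A, ∀ y ∈ A, x ≤ y → f x ≤ f y) ∧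
    (∀ γ : Γ, ∀ x ∈ A, f (γ • x) = γ • f x) ∧ ∀ y ∈ Q, f y = y

/-- One step of a zigzag in `Def_Γ(A, Q)`: both maps belong to `Def_Γ(A, Q)` and they are
comparable in the pointwise order (on `A`). -/
def posetDefStep (Γ : Type*) [Group Γ] {P : Type*} [PartialOrder P] [MulAction Γ P]
    (A Q : Set P) (f g : P → P) : Prop :=
  IsDefPosetMap Γ A Q f ∧ IsDefPosetMap Γ A Q g ∧
    ((∀ x ∈ A, f x ≤ g x) ∨ (∀ x ∈ A, g x ≤ f x))

/-- The induced Γ-subposet `A` of `P` strongly Γ-collapses to `Q ⊆ A`: there is a map `f` in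
`Def_Γ(A, Q)`, joined to the identity by a finite zigzag of pairwise comparable elements of
`Def_Γ(A, Q)`, whose image (on `A`) is contained in `Q`.  Taking `A = Set.univ` gives the
notion "`P` strongly Γ-collapses to `Q`". -/
def StronglyCollapsesOn (Γ : Type*) [Group Γ] {P : Type*} [PartialOrder P] [MulAction Γ P]
    (A Q : Set P) : Prop :=
  ∃ f : P → P, IsDefPosetMap Γ A Q f ∧
    Relation.ReflTransGen (posetDefStep Γ A Q) id f ∧ ∀ x ∈ A, f x ∈ Q

/-- An abstract simplicial complex on the vertex type `V`: a family of finite subsets of `V`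
closed under taking subsets. -/
structure Cplx (V : Type*) where
  faces : Set (Set V)
  finite_mem : ∀ σ ∈ faces, Set.Finite σ
  down_closed : ∀ σ ∈ faces, ∀ τ ⊆ σ, τ ∈ faces

/-- The vertex set of a simplicial complex. -/
def Cplx.verts {V : Type*} (K : Cplx V) : Set V := {v | ({v} : Set V) ∈ K.faces}

/-- `a` is an action of the group `Γ` on the vertex type of `K` by simplicial automorphisms. -/
def IsCplxAction (Γ : Type*) [Group Γ] {V : Type*} (a : Γ → V → V) (K : Cplx V) : Prop :=
  (∀ v, a 1 v = v) ∧ (∀ γ γ' : Γ, ∀ v, a (γ * γ') v = a γ (a γ' v)) ∧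
    ∀ γ : Γ, ∀ σ ∈ K.faces, (a γ) '' σ ∈ K.faces

/-- A simplicial multi-map from `K` to `L`: it assigns to each vertex of `K` a nonempty subset
of the vertices of `L`, so that `⋃ v ∈ σ, η v` is a simplex of `L` for every simplex `σ` of
`K`. -/
def IsMultiMap {V W : Type*} (K : Cplx V) (L : Cplx W) (η : V → Set W) : Prop :=
  (∀ v ∈ K.verts, (η v).Nonempty) ∧ ∀ σ ∈ K.faces, (⋃ v ∈ σ, η v) ∈ L.faces

/-- A Γ-equivariant simplicial multi-map, i.e. an element of `Map_Γ(K, L)`. -/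
def IsEquivMultiMap (Γ : Type*) [Group Γ] {V W : Type*} (a : Γ → V → V) (b : Γ → W → W)
    (K : Cplx V) (L : Cplx W) (η : V → Set W) : Prop :=
  IsMultiMap K L η ∧ ∀ γ : Γ, ∀ v ∈ K.verts, η (a γ v) = (b γ) '' (η v)

/-- Pointwise order on multi-maps out of `K` (on the vertices of `K`). -/
def mmLE {V W : Type*} (K : Cplx V) (η η' : V → Set W) : Prop := ∀ v ∈ K.verts, η v ⊆ η' v

/-- An element of `Def_Γ(K, L)`: a Γ-equivariant simplicial multi-map `K → K` with
`η v = {v}` for every vertex `v` of the subcomplex `L`. -/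
def IsDefMultiMap (Γ : Type*) [Group Γ] {V : Type*} (a : Γ → V → V) (K L : Cplx V)
    (η : V → Set V) : Prop :=
  IsEquivMultiMap Γ a a K K η ∧ ∀ v ∈ L.verts, η v = {v}

/-- One step of a zigzag in `Def_Γ(K, L)`: both multi-maps lie in `Def_Γ(K, L)` and they are
comparable. -/
def cplxDefStep (Γ : Type*) [Group Γ] {V : Type*} (a : Γ → V → V) (K L : Cplx V)
    (η η' : V → Set V) : Prop :=
  IsDefMultiMap Γ a K L η ∧ IsDefMultiMap Γ a K L η' ∧ (mmLE K η η' ∨ mmLE K η' η)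

/-- The Γ-simplicial complex `K` strongly Γ-collapses to its Γ-subcomplex `L`: there is a
simplicial map `f` belonging to the identity component of `Def_Γ(K, L)` (joined to the
identity by a finite zigzag of pairwise comparable elements) whose image is contained in
`L`. -/
def CplxCollapses (Γ : Type*) [Group Γ] {V : Type*} (a : Γ → V → V) (K L : Cplx V) : Prop :=
  ∃ f : V → V, IsDefMultiMap Γ a K L (fun v => {f v}) ∧
    Relation.ReflTransGen (cplxDefStep Γ a K L) (fun v => {v}) (fun v => {f v}) ∧
    ∀ σ ∈ K.faces, f '' σ ∈ L.faces

/-- The order complex of the subset `S` of the poset `P`: its simplices are the finite chains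
of `P` contained in `S`.  `orderCplx Set.univ` is the order complex `Δ(P)`. -/
def orderCplx {P : Type*} [PartialOrder P] (S : Set P) : Cplx P where
  faces := {σ | σ.Finite ∧ σ ⊆ S ∧ IsChain (· ≤ ·) σ}
  finite_mem := fun _ h => h.1
  down_closed := fun _ h τ hτσ =>
    ⟨h.1.subset hτσ, hτσ.trans h.2.1, fun x hx y hy hxy => h.2.2 (hτσ hx) (hτσ hy) hxy⟩

section Aux

variable {Γ P : Type*} [Group Γ] [PartialOrder P] [MulAction Γ P]

lemma orderCplx_verts (S : Set P) : (orderCplx S).verts = S := by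
  ext v
  constructor
  · rintro ⟨-, hv, -⟩
    exact hv rfl
  · intro hv
    exact ⟨Set.finite_singleton v, Set.singleton_subset_iff.mpr hv,
      Set.subsingleton_singleton.isChain⟩

lemma rtg_symm {α : Type*} {r : α → α → Prop} (hs : Symmetric r) {a b : α}
    (h : Relation.ReflTransGen r a b) : Relation.ReflTransGen r b a := by
  induction h with
  | refl => exact .refl
  | tail _ hbc ih => exact (Relation.ReflTransGen.single (hs hbc)).trans ih

lemma defMultiMap_of_defPosetMap (Q : Set P) (f : P → P)
    (hf : IsDefPosetMap Γ Set.univ Q f) :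
    IsDefMultiMap Γ (fun γ (x : P) => γ • x) (orderCplx (Set.univ : Set P)) (orderCplx Q)
      (fun v => {f v}) := by
  obtain ⟨-, hmono, hequiv, hfix⟩ := hf
  refine ⟨⟨⟨fun v _ => ⟨f v, rfl⟩, fun σ hσ => ?_⟩, fun γ v _ => ?_⟩, fun v hv => ?_⟩
  · obtain ⟨hfin, -, hch⟩ := hσ
    have himg : (⋃ v ∈ σ, ({f v} : Set P)) = f '' σ := by
      ext p; simp [eq_comm]
    rw [himg]
    exact ⟨hfin.image f, Set.subset_univ _,
      hch.image_of_map_rel _ _ f (fun x y h => hmono x trivial y trivial h)⟩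
  · simp only
    rw [hequiv γ v trivial, Set.image_singleton]
  · rw [orderCplx_verts] at hv
    simp only
    rw [hfix v hv]

lemma pathB_step (Q : Set P) (f g : P → P)
    (hf : IsDefPosetMap Γ Set.univ Q f) (hg : IsDefPosetMap Γ Set.univ Q g)
    (hfg : ∀ x, f x ≤ g x)
    (hD : ∀ a b : P, a < b → f a ≠ g a → f b = g b) :
    Relation.ReflTransGen
      (cplxDefStep Γ (fun γ (x : P) => γ • x) (orderCplx (Set.univ : Set P)) (orderCplx Q))
      (fun v => {f v}) (fun v => {g v}) := by
  have hmf : Monotone f := fun {x y} h => hf.2.1 x trivial y trivial h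
  have hmg : Monotone g := fun {x y} h => hg.2.1 x trivial y trivial h
  set η : P → Set P := fun v => {f v, g v} with hη
  have comp : ∀ a b : P, a ≤ b → ∀ p ∈ ({f a, g a} : Set P), ∀ q ∈ ({f b, g b} : Set P),
      p ≤ q ∨ q ≤ p := by
    intro a b hab p hp q hq
    simp only [Set.mem_insert_iff, Set.mem_singleton_iff] at hp hq
    rcases hp with rfl | rfl <;> rcases hq with rfl | rfl
    · exact Or.inl (hmf hab)
    · exact Or.inl ((hmf hab).trans (hfg b))
    · rcases eq_or_lt_of_le hab with rfl | hlt
      · exact Or.inr (hfg a)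
      · by_cases hda : f a = g a
        · exact Or.inl (by rw [← hda]; exact hmf hab)
        · exact Or.inl (by rw [hD a b hlt hda]; exact hmg hab)
    · exact Or.inl (hmg hab)
  have hdefη : IsDefMultiMap Γ (fun γ (x : P) => γ • x) (orderCplx (Set.univ : Set P))
      (orderCplx Q) η := by
    refine ⟨⟨⟨fun v _ => ⟨f v, Set.mem_insert _ _⟩, fun σ hσ => ?_⟩, fun γ v _ => ?_⟩,
      fun v hv => ?_⟩
    · obtain ⟨hfin, -, hch⟩ := hσ
      refine ⟨?_, Set.subset_univ _, ?_⟩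
      · have hsub : (⋃ v ∈ σ, η v) ⊆ f '' σ ∪ g '' σ := by
          intro p hp
          simp only [Set.mem_iUnion, exists_prop] at hp
          obtain ⟨v, hv, hp⟩ := hp
          simp only [hη, Set.mem_insert_iff, Set.mem_singleton_iff] at hp
          rcases hp with rfl | rfl
          · exact Or.inl ⟨v, hv, rfl⟩
          · exact Or.inr ⟨v, hv, rfl⟩
        exact ((hfin.image f).union (hfin.image g)).subset hsub
      · intro p hp q hq _
        simp only [Set.mem_iUnion, exists_prop] at hp hq
        obtain ⟨a, ha, hpa⟩ := hp
        obtain ⟨b, hb, hqb⟩ := hq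
        have hcomp : a ≤ b ∨ b ≤ a := by
          rcases eq_or_ne a b with rfl | hne'
          · exact Or.inl le_rfl
          · exact hch ha hb hne'
        rcases hcomp with hab | hba
        · exact comp a b hab p hpa q hqb
        · exact (comp b a hba q hqb p hpa).symm
    · simp only [hη]
      rw [hf.2.2.1 γ v trivial, hg.2.2.1 γ v trivial, Set.image_insert_eq,
        Set.image_singleton]
    · rw [orderCplx_verts] at hv
      simp only [hη]
      rw [hf.2.2.2 v hv, hg.2.2.2 v hv, Set.pair_eq_singleton]
  have hdeff := defMultiMap_of_defPosetMap Q f hf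
  have hdefg := defMultiMap_of_defPosetMap Q g hg
  refine Relation.ReflTransGen.head ⟨hdeff, hdefη, Or.inl ?_⟩
    (Relation.ReflTransGen.single ⟨hdefη, hdefg, Or.inr ?_⟩)
  · intro v _
    exact Set.singleton_subset_iff.mpr (Set.mem_insert _ _)
  · intro v _
    exact Set.singleton_subset_iff.mpr (Set.mem_insert_of_mem _ rfl)

lemma pathB [Finite Γ] [Finite P] (hmono : ∀ γ : Γ, Monotone fun x : P => γ • x)
    (Q : Set P) (f g : P → P)
    (hf : IsDefPosetMap Γ Set.univ Q f) (hg : IsDefPosetMap Γ Set.univ Q g)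
    (hfg : ∀ x, f x ≤ g x) :
    Relation.ReflTransGen
      (cplxDefStep Γ (fun γ (x : P) => γ • x) (orderCplx (Set.univ : Set P)) (orderCplx Q))
      (fun v => {f v}) (fun v => {g v}) := by
  classical
  have key : ∀ n : ℕ, ∀ f g : P → P, IsDefPosetMap Γ Set.univ Q f →
      IsDefPosetMap Γ Set.univ Q g → (∀ x, f x ≤ g x) → {x | f x ≠ g x}.ncard ≤ n →
      Relation.ReflTransGen
        (cplxDefStep Γ (fun γ (x : P) => γ • x) (orderCplx (Set.univ : Set P)) (orderCplx Q))
        (fun v => {f v}) (fun v => {g v}) := by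
    intro n
    induction n with
    | zero =>
      intro f g hf hg hfg hcard
      have hemp : {x | f x ≠ g x} = ∅ := by
        rw [← Set.ncard_eq_zero (Set.toFinite _)]
        omega
      have hfeq : f = g := by
        funext x
        by_contra hx
        exact (Set.eq_empty_iff_forall_notMem.mp hemp x) hx
      rw [hfeq]
    | succ n ih =>
      intro f g hf hg hfg hcard
      by_cases hemp : {x | f x ≠ g x} = ∅
      · have hfeq : f = g := by
          funext x
          by_contra hx
          exact (Set.eq_empty_iff_forall_notMem.mp hemp x) hx
        rw [hfeq]
      · obtain ⟨x₀, hx₀, hx₀max⟩ := Set.Finite.exists_maximalFor id _ (Set.toFinite _)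
          (Set.nonempty_iff_ne_empty.mpr hemp)
        have hx₀D : f x₀ ≠ g x₀ := hx₀
        -- the set where f and g differ is Γ-invariant
        have hDinv : ∀ γ : Γ, ∀ y : P, f y ≠ g y → f (γ • y) ≠ g (γ • y) := by
          intro γ y hy
          rw [hf.2.2.1 γ y trivial, hg.2.2.1 γ y trivial]
          exact fun hc => hy (MulAction.injective γ hc)
        -- every element of the orbit of x₀ is a maximal point of the difference set
        have hOmax : ∀ y ∈ MulAction.orbit Γ x₀, f y ≠ g y ∧
            ∀ b : P, f b ≠ g b → y ≤ b → y = b := by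
          rintro y ⟨γ, rfl⟩
          refine ⟨hDinv γ x₀ hx₀D, fun b hb hyb => ?_⟩
          have h1 : x₀ ≤ γ⁻¹ • b := by
            have := hmono γ⁻¹ hyb
            simpa using this
          have h2 : x₀ = γ⁻¹ • b := le_antisymm h1 (hx₀max (hDinv γ⁻¹ b hb) h1)
          rw [h2]
          simp
        set h : P → P := fun y => if y ∈ MulAction.orbit Γ x₀ then g y else f y with hhdef
        have hfh : ∀ y, f y ≤ h y := by
          intro y
          by_cases hy : y ∈ MulAction.orbit Γ x₀ <;> simp [hhdef, hy, hfg y]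
        have hhg : ∀ y, h y ≤ g y := by
          intro y
          by_cases hy : y ∈ MulAction.orbit Γ x₀ <;> simp [hhdef, hy, hfg y]
        have hmf : Monotone f := fun {a b} hab => hf.2.1 a trivial b trivial hab
        have hmg : Monotone g := fun {a b} hab => hg.2.1 a trivial b trivial hab
        have hmh : ∀ y z : P, y ≤ z → h y ≤ h z := by
          intro y z hyz
          by_cases hz : z ∈ MulAction.orbit Γ x₀
          · have hz' : h z = g z := if_pos hz
            rw [hz']
            exact (hhg y).trans (hmg hyz)
          · have hz' : h z = f z := if_neg hz
            rw [hz']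
            by_cases hy : y ∈ MulAction.orbit Γ x₀
            · have hy' : h y = g y := if_pos hy
              rw [hy']
              rcases eq_or_lt_of_le hyz with rfl | hlt
              · exact absurd hy hz
              · have hzD : f z = g z := by
                  by_contra hzD
                  exact hlt.ne ((hOmax y hy).2 z hzD hyz)
                rw [hzD]
                exact hmg hyz
            · have hy' : h y = f y := if_neg hy
              rw [hy']
              exact hmf hyz
        have horb : ∀ (γ : Γ) (y : P),
            γ • y ∈ MulAction.orbit Γ x₀ ↔ y ∈ MulAction.orbit Γ x₀ := by
          intro γ y
          constructor
          · rintro ⟨δ, hδ⟩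
            have hδ' : δ • x₀ = γ • y := hδ
            exact ⟨γ⁻¹ * δ, show (γ⁻¹ * δ) • x₀ = y by rw [mul_smul, hδ', inv_smul_smul]⟩
          · rintro ⟨δ, hδ⟩
            have hδ' : δ • x₀ = y := hδ
            exact ⟨γ * δ, show (γ * δ) • x₀ = γ • y by rw [mul_smul, hδ']⟩
        have hhdefP : IsDefPosetMap Γ Set.univ Q h := by
          refine ⟨fun a _ => trivial, fun a _ b _ hab => hmh a b hab, fun γ y _ => ?_,
            fun y hy => ?_⟩
          · by_cases hy : y ∈ MulAction.orbit Γ x₀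
            · have h1 : h (γ • y) = g (γ • y) := if_pos ((horb γ y).mpr hy)
              have h2 : h y = g y := if_pos hy
              rw [h1, h2, hg.2.2.1 γ y trivial]
            · have h1 : h (γ • y) = f (γ • y) := if_neg (fun hc => hy ((horb γ y).mp hc))
              have h2 : h y = f y := if_neg hy
              rw [h1, h2, hf.2.2.1 γ y trivial]
          · by_cases hy' : y ∈ MulAction.orbit Γ x₀
            · have hq : h y = g y := if_pos hy'
              rw [hq]
              exact hg.2.2.2 y hy
            · have hq : h y = f y := if_neg hy'
              rw [hq]
              exact hf.2.2.2 y hy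
        -- f and h differ only on the orbit of x₀, whose elements are maximal differences
        have hstep : ∀ a b : P, a < b → f a ≠ h a → f b = h b := by
          intro a b hab ha
          have haO : a ∈ MulAction.orbit Γ x₀ := by
            by_contra haO
            exact ha (if_neg haO).symm
          by_contra hb
          have hbO : b ∈ MulAction.orbit Γ x₀ := by
            by_contra hbO
            exact hb (if_neg hbO).symm
          have hbD : f b ≠ g b := (hOmax b hbO).1
          exact hab.ne ((hOmax a haO).2 b hbD hab.le)
        have path1 := pathB_step Q f h hf hhdefP hfh hstep
        -- h and g differ on a strictly smaller set
        have hsub : {y | h y ≠ g y} ⊆ {y | f y ≠ g y} \ {x₀} := by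
          intro y hy
          have hyO : y ∉ MulAction.orbit Γ x₀ := by
            intro hyO
            exact hy (if_pos hyO)
          have hy' : h y = f y := if_neg hyO
          refine ⟨show f y ≠ g y by rw [← hy']; exact hy, ?_⟩
          intro hyx
          exact hyO (by rw [Set.mem_singleton_iff.mp hyx]; exact ⟨1, one_smul _ _⟩)
        have hcard' : {y | h y ≠ g y}.ncard ≤ n := by
          have h1 : {y | h y ≠ g y}.ncard ≤ ({y | f y ≠ g y} \ {x₀}).ncard :=
            Set.ncard_le_ncard hsub (Set.toFinite _)
          have h2 : ({y | f y ≠ g y} \ {x₀}).ncard < {y | f y ≠ g y}.ncard :=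
            Set.ncard_diff_singleton_lt_of_mem hx₀ (Set.toFinite _)
          omega
        exact path1.trans (ih h g hhdefP hg hhg hcard')
  exact key ({x | f x ≠ g x}.ncard) f g hf hg hfg le_rfl

end Aux

/-- Let Γ be a finite group, P a finite Γ-poset and Q an induced Γ-subposet of P.
If P strongly Γ-collapses to Q, then the order complex Δ(P) strongly Γ-collapses to Δ(Q). -/
theorem orderCplx_collapses_of_stronglyCollapses {Γ P : Type*} [Group Γ] [Finite Γ]
    [PartialOrder P] [Finite P] [MulAction Γ P]
    (hmono : ∀ γ : Γ, Monotone fun x : P => γ • x)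
    (Q : Set P) (hQinv : ∀ γ : Γ, ∀ x ∈ Q, γ • x ∈ Q)
    (h : StronglyCollapsesOn Γ Set.univ Q) :
    CplxCollapses Γ (fun γ (x : P) => γ • x) (orderCplx (Set.univ : Set P)) (orderCplx Q) := by
  obtain ⟨f, hf, hzig, himg⟩ := h
  refine ⟨f, defMultiMap_of_defPosetMap Q f hf, ?_, ?_⟩
  · clear himg hf
    have hsym : Symmetric
        (cplxDefStep Γ (fun γ (x : P) => γ • x) (orderCplx (Set.univ : Set P)) (orderCplx Q)) :=
      fun a b ⟨h1, h2, h3⟩ => ⟨h2, h1, h3.symm⟩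
    have main : Relation.ReflTransGen
        (cplxDefStep Γ (fun γ (x : P) => γ • x) (orderCplx (Set.univ : Set P)) (orderCplx Q))
        (fun v => ({id v} : Set P)) (fun v => {f v}) := by
      induction hzig with
      | refl => exact .refl
      | tail _ hbc ih =>
        obtain ⟨hb, hc, hor⟩ := hbc
        rcases hor with hle | hle
        · exact ih.trans (pathB hmono Q _ _ hb hc (fun x => hle x trivial))
        · exact ih.trans (rtg_symm hsym (pathB hmono Q _ _ hc hb (fun x => hle x trivial)))
    exact main
  · intro σ hσ
    obtain ⟨hfin, -, hch⟩ := hσ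
    refine ⟨hfin.image f, ?_, hch.image_of_map_rel _ _ f (fun x y hxy => hf.2.1 x trivial y trivial hxy)⟩
    rintro p ⟨v, -, rfl⟩
    exact himg v trivial
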